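/- Let ψ : [1, ∞) → ℝ satisfy ψ(1) = 0 and suppose α ↦ ψ(α)/(α−1) is monotone increasing on (1, ∞). Define Ψ(c) := sup_{α ≥ 1} {cα − ψ(α)} and Ψ⁻(c) := Ψ(c) − c = sup_{α ≥ 1} {c(α−1) − ψ(α)}, and let D₁⁺ := inf_{α>1} ψ(α)/(α−1). Then for every c ∈ ℝ one has Ψ(c) ≥ c and Ψ⁻(c) ≥ 0, and these inequalities are strict if and only if c > D₁⁺. -/

import Mathlib

open Set

/-- Legendre–Fenchel transform of `ψ` restricted to `[1,∞)`:  `Ψ(c) = sup_{α≥1} {cα − ψ(α)}`. -/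
noncomputable def PsiE (ψ : ℝ → ℝ) (c : ℝ) : EReal :=
  ⨆ α ∈ Set.Ici (1 : ℝ), ((c * α - ψ α : ℝ) : EReal)

/-- Shifted transform `Ψ⁻(c) = sup_{α≥1} {c(α−1) − ψ(α)} = Ψ(c) − c`. -/
noncomputable def PsimE (ψ : ℝ → ℝ) (c : ℝ) : EReal :=
  ⨆ α ∈ Set.Ici (1 : ℝ), ((c * (α - 1) - ψ α : ℝ) : EReal)

/-- `D₁⁺ := inf_{α>1} ψ(α)/(α−1)` (possibly `−∞`). -/
noncomputable def D1E (ψ : ℝ → ℝ) : EReal :=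
  ⨅ α ∈ Set.Ioi (1 : ℝ), ((ψ α / (α - 1) : ℝ) : EReal)

lemma D1E_lt_iff (ψ : ℝ → ℝ) (c : ℝ) :
    D1E ψ < (c : EReal) ↔ ∃ α, 1 < α ∧ ψ α / (α - 1) < c := by
  unfold D1E
  rw [iInf_lt_iff]
  constructor
  · rintro ⟨α, h⟩
    rw [iInf_lt_iff] at h
    obtain ⟨hα, h⟩ := h
    exact ⟨α, hα, by exact_mod_cast h⟩
  · rintro ⟨α, hα, h⟩
    exact ⟨α, by rw [iInf_lt_iff]; exact ⟨hα, by exact_mod_cast h⟩⟩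

theorem stmt9 (ψ : ℝ → ℝ) (hψ1 : ψ 1 = 0)
    (hmono : MonotoneOn (fun α => ψ α / (α - 1)) (Set.Ioi (1 : ℝ))) :
    ∀ c : ℝ,
      (c : EReal) ≤ PsiE ψ c ∧ (0 : EReal) ≤ PsimE ψ c ∧
      ((c : EReal) < PsiE ψ c ↔ D1E ψ < (c : EReal)) ∧
      ((0 : EReal) < PsimE ψ c ↔ D1E ψ < (c : EReal)) := by
  intro c
  have key : ∀ α, 1 < α → (c * (α - 1) - ψ α > 0 ↔ ψ α / (α - 1) < c) := by
    intro α hα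
    have hpos : 0 < α - 1 := by linarith
    rw [div_lt_iff₀ hpos]
    constructor <;> intro h <;> nlinarith
  have h1 : (c : EReal) ≤ PsiE ψ c := by
    have := le_iSup₂ (f := fun α (_ : α ∈ Set.Ici (1:ℝ)) => ((c * α - ψ α : ℝ) : EReal))
      1 (by simp)
    simpa [hψ1, PsiE] using this
  have h2 : (0 : EReal) ≤ PsimE ψ c := by
    have := le_iSup₂ (f := fun α (_ : α ∈ Set.Ici (1:ℝ)) => ((c * (α - 1) - ψ α : ℝ) : EReal))
      1 (by simp)
    simpa [hψ1, PsimE] using this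
  refine ⟨h1, h2, ?_, ?_⟩
  · rw [D1E_lt_iff]
    unfold PsiE
    constructor
    · intro h
      rw [lt_iSup_iff] at h
      obtain ⟨α, h⟩ := h
      rw [lt_iSup_iff] at h
      obtain ⟨hα, h⟩ := h
      have hα' : (1:ℝ) ≤ α := hα
      have hr : c < c * α - ψ α := by exact_mod_cast h
      have hne : 1 < α := by
        rcases lt_or_eq_of_le hα' with h' | h'
        · exact h'
        · exfalso; rw [← h'] at hr; simp [hψ1] at hr
      exact ⟨α, hne, (key α hne).1 (by nlinarith)⟩
    · rintro ⟨α, hα, h⟩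
      rw [lt_iSup_iff]
      refine ⟨α, ?_⟩
      rw [lt_iSup_iff]
      refine ⟨le_of_lt hα, ?_⟩
      have := (key α hα).2 h
      have hr : c < c * α - ψ α := by nlinarith
      exact_mod_cast hr
  · rw [D1E_lt_iff]
    unfold PsimE
    constructor
    · intro h
      rw [lt_iSup_iff] at h
      obtain ⟨α, h⟩ := h
      rw [lt_iSup_iff] at h
      obtain ⟨hα, h⟩ := h
      have hα' : (1:ℝ) ≤ α := hα
      have hr : (0:ℝ) < c * (α - 1) - ψ α := by exact_mod_cast h
      have hne : 1 < α := by
        rcases lt_or_eq_of_le hα' with h' | h'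
        · exact h'
        · exfalso; rw [← h'] at hr; simp [hψ1] at hr
      exact ⟨α, hne, (key α hne).1 hr⟩
    · rintro ⟨α, hα, h⟩
      rw [lt_iSup_iff]
      refine ⟨α, ?_⟩
      rw [lt_iSup_iff]
      refine ⟨le_of_lt hα, ?_⟩
      exact_mod_cast (key α hα).2 h
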